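/- Suppose ρ(A) > 0 and ρ(A) < (λ_m + λ_2)/(λ_m − λ_2), and let W = I_m − αL with α a real number satisfying α > 0 and λ_2^{-1}(1 − ρ(A)^{-1}) < α < λ_m^{-1}(1 + ρ(A)^{-1}). Then for every complex λ with |λ| ≥ 1, the geometric multiplicities agree: dim_ℂ Null(W ⊗ A − λ I_{mn}) = dim_ℂ Null(A − λ I_n). -/

import Mathlib

open Matrix Kronecker Polynomial

section Aux
open Module LinearMap

lemma aux_charpoly_conj {k R : Type*} [Fintype k] [DecidableEq k] [CommRing R]
    (U V M : Matrix k k R) (hUV : U*V=1) (hVU : V*U=1) :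
    (U*M*V).charpoly = M.charpoly := by
  unfold Matrix.charpoly
  have hc : ∀ N : Matrix k k R, Commute (scalar k (X:R[X])) (C.mapMatrix N) := by
    intro N
    exact (Matrix.scalar_commute _ (fun r => Commute.all _ _) _)
  have h : charmatrix (U*M*V) = (C.mapMatrix U) * charmatrix M * (C.mapMatrix V) := by
    unfold charmatrix
    rw [_root_.map_mul, _root_.map_mul, mul_sub, sub_mul]
    congr 1
    rw [mul_assoc, (hc V).eq, ← mul_assoc, ← _root_.map_mul, hUV]
    simp
  have h1 : (C.mapMatrix U).det * (C.mapMatrix V).det = 1 := by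
    rw [← det_mul, ← _root_.map_mul, hUV]; simp
  rw [h, det_mul, det_mul, mul_right_comm, h1, one_mul]

lemma aux_charpoly_diag {k R : Type*} [Fintype k] [DecidableEq k] [CommRing R]
    (d : k → R) : (diagonal d).charpoly = ∏ i, (X - C (d i)) := by
  unfold Matrix.charpoly charmatrix
  have : (scalar k (X:R[X])) - C.mapMatrix (diagonal d) = diagonal (fun i => X - C (d i)) := by
    ext i j
    by_cases h : i = j <;> simp [h, diagonal_apply, scalar_apply]
  rw [this, det_diagonal]

lemma aux_conj {k : Type*} [Fintype k] [DecidableEq k] (P Q M : Matrix k k ℂ)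
    (hPQ : P*Q = 1) (hQP : Q*P = 1) :
    finrank ℂ (ker (P*M*Q).mulVecLin) = finrank ℂ (ker M.mulVecLin) := by
  let eQ : (k → ℂ) ≃ₗ[ℂ] (k → ℂ) :=
    LinearEquiv.ofLinear Q.mulVecLin P.mulVecLin
      (by rw [← Matrix.mulVecLin_mul, hQP, Matrix.mulVecLin_one])
      (by rw [← Matrix.mulVecLin_mul, hPQ, Matrix.mulVecLin_one])
  have h1 : (P*M*Q).mulVecLin = ((P*M).mulVecLin).comp (eQ : (k → ℂ) →ₗ[ℂ] (k → ℂ)) := by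
    rw [Matrix.mulVecLin_mul]; rfl
  have hPinj : Function.Injective P.mulVecLin := by
    intro a b hab
    have := congrArg Q.mulVecLin hab
    simpa [Matrix.mulVecLin_apply, Matrix.mulVec_mulVec, hQP] using this
  have h2 : ker (P*M).mulVecLin = ker M.mulVecLin := by
    ext x
    simp only [LinearMap.mem_ker, Matrix.mulVecLin_apply, ← Matrix.mulVec_mulVec]
    constructor
    · intro h; exact hPinj (by simpa [Matrix.mulVecLin_apply] using h)
    · intro h; rw [h, Matrix.mulVec_zero]
  rw [h1, LinearMap.ker_comp, h2, Submodule.comap_equiv_eq_map_symm]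
  exact LinearEquiv.finrank_map_eq _ _

lemma aux_block {m n : ℕ} (d : Fin m → ℂ) (Ac : Matrix (Fin n) (Fin n) ℂ) (lam : ℂ)
    (i0 : Fin m) (hd0 : d i0 = 1)
    (hinj : ∀ i, i ≠ i0 → Function.Injective (d i • Ac - lam • 1 : Matrix (Fin n) (Fin n) ℂ).mulVecLin) :
    finrank ℂ (ker ((diagonal d ⊗ₖ Ac - lam • (1 : Matrix (Fin m × Fin n) (Fin m × Fin n) ℂ)).mulVecLin))
      = finrank ℂ (ker ((Ac - lam • 1).mulVecLin)) := by
  set M := diagonal d ⊗ₖ Ac - lam • (1 : Matrix (Fin m × Fin n) (Fin m × Fin n) ℂ) with hM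
  set B : Fin m → Matrix (Fin n) (Fin n) ℂ := fun i => d i • Ac - lam • 1 with hB
  have hslice : ∀ (x : Fin m × Fin n → ℂ) (i : Fin m) (j : Fin n),
      (M *ᵥ x) (i,j) = ((B i) *ᵥ fun j' => x (i,j')) j := by
    intro x i j
    simp only [hM, hB, Matrix.sub_mulVec, Matrix.smul_mulVec, Matrix.one_mulVec,
      Pi.sub_apply, Pi.smul_apply, smul_eq_mul]
    congr 1
    simp only [Matrix.mulVec, dotProduct, Fintype.sum_prod_type,
      kroneckerMap_apply, diagonal_apply, Matrix.smul_apply, smul_eq_mul]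
    rw [Finset.sum_eq_single i]
    · simp [Finset.mul_sum, mul_assoc]
    · intro b _ hb
      simp [Ne.symm hb]
    · simp
  have hmem : ∀ x : Fin m × Fin n → ℂ, x ∈ ker M.mulVecLin ↔
      ∀ i, (fun j => x (i,j)) ∈ ker (B i).mulVecLin := by
    intro x
    simp only [LinearMap.mem_ker, Matrix.mulVecLin_apply]
    constructor
    · intro h i
      funext j
      rw [← hslice]; exact congrFun h (i,j)
    · intro h
      funext p
      obtain ⟨i, j⟩ := p
      rw [hslice]; exact congrFun (h i) j
  have hkerB : ∀ i, i ≠ i0 → ker (B i).mulVecLin = ⊥ :=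
    fun i hi => LinearMap.ker_eq_bot.mpr (hinj i hi)
  let Φ : ker M.mulVecLin →ₗ[ℂ] ker (B i0).mulVecLin :=
    { toFun := fun x => ⟨fun j => x.1 (i0, j), (hmem x.1).1 x.2 i0⟩
      map_add' := fun _ _ => rfl
      map_smul' := fun _ _ => rfl }
  have hbij : Function.Bijective Φ := by
    constructor
    · intro x y hxy
      apply Subtype.ext
      funext p
      obtain ⟨i, j⟩ := p
      by_cases h : i = i0
      · subst h
        exact congrFun (congrArg Subtype.val hxy) j
      · have hx : (fun j => x.1 (i, j)) = 0 := by
          have := (hmem x.1).1 x.2 i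
          rwa [hkerB i h, Submodule.mem_bot] at this
        have hy : (fun j => y.1 (i, j)) = 0 := by
          have := (hmem y.1).1 y.2 i
          rwa [hkerB i h, Submodule.mem_bot] at this
        calc x.1 (i, j) = 0 := congrFun hx j
          _ = y.1 (i, j) := (congrFun hy j).symm
    · intro y
      refine ⟨⟨fun p => if p.1 = i0 then y.1 p.2 else 0, ?_⟩, ?_⟩
      · rw [hmem]
        intro i
        by_cases h : i = i0
        · subst h; simpa using y.2
        · simp only [if_neg h]
          exact Submodule.zero_mem _
      · apply Subtype.ext
        funext j
        exact if_pos rfl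
  have h1 : finrank ℂ (ker M.mulVecLin) = finrank ℂ (ker (B i0).mulVecLin) :=
    LinearEquiv.finrank_eq (LinearEquiv.ofBijective Φ hbij)
  rw [h1]
  have : B i0 = Ac - lam • 1 := by rw [hB]; simp [hd0]
  rw [this]


end Aux

/-- With L the Laplacian of a connected graph on m > 2 vertices,
eigenvalues 0 = λ₁ < λ₂ ≤ ⋯ ≤ λₘ, 0 < ρ(A) < (λₘ + λ₂)/(λₘ − λ₂), and W = I − αL
with α > 0 and λ₂⁻¹(1 − ρ(A)⁻¹) < α < λₘ⁻¹(1 + ρ(A)⁻¹): for every λ ∈ ℂ with |λ| ≥ 1,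
dim Null(W ⊗ A − λI) = dim Null(A − λI) over ℂ. -/
theorem stmt7 (m n : ℕ) (hm : 2 < m)
    (G : SimpleGraph (Fin m)) [DecidableRel G.Adj]
    (L : Matrix (Fin m) (Fin m) ℝ) (hL : L = G.lapMatrix ℝ)
    (hconn : G.Connected)
    (eig : Fin m → ℝ) (heig_mono : Monotone eig)
    (hchar : L.charpoly = ∏ i, (X - C (eig i)))
    (heig0 : eig ⟨0, by omega⟩ = 0) (heig1 : 0 < eig ⟨1, by omega⟩)
    (A : Matrix (Fin n) (Fin n) ℝ)
    -- ρA is the spectral radius of A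
    (ρA : ℝ) (hρ_pos : 0 < ρA)
    (hρ_ub : ∀ μ : ℂ, (∃ v : Fin n → ℂ, v ≠ 0 ∧
        (A.map Complex.ofReal).mulVec v = μ • v) → ‖μ‖ ≤ ρA)
    (hρ_mem : ∃ μ : ℂ, (∃ v : Fin n → ℂ, v ≠ 0 ∧
        (A.map Complex.ofReal).mulVec v = μ • v) ∧ ‖μ‖ = ρA)
    (hspec : ρA < (eig ⟨m - 1, by omega⟩ + eig ⟨1, by omega⟩) /
        (eig ⟨m - 1, by omega⟩ - eig ⟨1, by omega⟩))
    (α : ℝ) (hα_pos : 0 < α)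
    (hα_lo : (eig ⟨1, by omega⟩)⁻¹ * (1 - ρA⁻¹) < α)
    (hα_hi : α < (eig ⟨m - 1, by omega⟩)⁻¹ * (1 + ρA⁻¹))
    (W : Matrix (Fin m) (Fin m) ℝ) (hW : W = 1 - α • L) :
    ∀ lam : ℂ, 1 ≤ ‖lam‖ →
      Module.finrank ℂ
        (LinearMap.ker (Matrix.mulVecLin
          (((W ⊗ₖ A).map Complex.ofReal) -
            lam • (1 : Matrix (Fin m × Fin n) (Fin m × Fin n) ℂ)))) =
      Module.finrank ℂ
        (LinearMap.ker (Matrix.mulVecLin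
          ((A.map Complex.ofReal) - lam • (1 : Matrix (Fin n) (Fin n) ℂ)))) := by
  intro lam hlam
  -- Hermitian structure of L
  have hLh : L.IsHermitian := by
    rw [hL]; exact (G.posSemidef_lapMatrix (R := ℝ)).1
  set e : Fin m → ℝ := hLh.eigenvalues with he
  set U : Matrix (Fin m) (Fin m) ℝ := (hLh.eigenvectorUnitary : Matrix (Fin m) (Fin m) ℝ) with hU
  have hUV : U * star U = 1 := Matrix.mem_unitaryGroup_iff.mp hLh.eigenvectorUnitary.2
  have hVU : star U * U = 1 := Matrix.mem_unitaryGroup_iff'.mp hLh.eigenvectorUnitary.2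
  have hLspec : L = U * diagonal e * star U := hLh.spectral_theorem
  -- characteristic polynomial of L via eigenvalues
  have hcharL : L.charpoly = ∏ i, (X - C (e i)) := by
    rw [hLspec, aux_charpoly_conj U (star U) _ hUV hVU, aux_charpoly_diag]
  -- multiset equality of eigenvalues
  have hprodmap : ∀ f : Fin m → ℝ,
      (∏ i, (X - C (f i))) = ((Finset.univ.val.map f).map fun a => (X : ℝ[X]) - C a).prod := by
    intro f
    rw [Multiset.map_map]
    rfl
  have hms : Multiset.map eig Finset.univ.val = Multiset.map e Finset.univ.val := by
    have h1 : ((Finset.univ.val.map eig).map fun a => (X:ℝ[X]) - C a).prod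
        = ((Finset.univ.val.map e).map fun a => (X:ℝ[X]) - C a).prod := by
      rw [← hprodmap, ← hprodmap, ← hchar, ← hcharL]
    have := congrArg Polynomial.roots h1
    rwa [Polynomial.roots_multiset_prod_X_sub_C, Polynomial.roots_multiset_prod_X_sub_C] at this
  -- eig vanishes only at index 0
  have hfe : Finset.univ.filter (fun i => eig i = 0) = {(⟨0, by omega⟩ : Fin m)} := by
    ext i
    simp only [Finset.mem_filter, Finset.mem_univ, true_and, Finset.mem_singleton]
    constructor
    · intro h
      by_contra hne
      have h1 : (⟨1, by omega⟩ : Fin m) ≤ i := by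
        rw [Fin.le_def]
        simp only []
        have : i.val ≠ 0 := fun h0 => hne (Fin.ext h0)
        omega
      have := heig_mono h1
      linarith [heig1]
    · intro h; rw [h]; exact heig0
  have hcnt : ∀ f : Fin m → ℝ, (Finset.univ.filter (fun i => f i = 0)).card
      = Multiset.count 0 (Multiset.map f Finset.univ.val) := by
    intro f
    rw [Multiset.count_map]
    rw [Finset.card, Finset.filter_val]
    congr 1
    exact Multiset.filter_congr (fun x _ => by rw [eq_comm])
  have hcard0 : (Finset.univ.filter (fun i => e i = 0)).card = 1 := by
    rw [hcnt, ← hms, ← hcnt, hfe, Finset.card_singleton]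
  obtain ⟨i0, hi0⟩ := Finset.card_eq_one.mp hcard0
  have he0 : e i0 = 0 := by
    have : i0 ∈ Finset.univ.filter (fun i => e i = 0) := by
      rw [hi0]; exact Finset.mem_singleton_self i0
    simpa using this
  have hne : ∀ i, i ≠ i0 → e i ≠ 0 := by
    intro i hi h
    have : i ∈ Finset.univ.filter (fun i => e i = 0) := by simp [h]
    rw [hi0, Finset.mem_singleton] at this
    exact hi this
  -- bounds for nonzero eigenvalues of L
  have hbound : ∀ i, e i ≠ 0 → eig ⟨1, by omega⟩ ≤ e i ∧ e i ≤ eig ⟨m - 1, by omega⟩ := by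
    intro i hiz
    have hmem : e i ∈ Multiset.map eig Finset.univ.val := by
      rw [hms]
      exact Multiset.mem_map_of_mem e (Finset.mem_val.mpr (Finset.mem_univ i))
    obtain ⟨j, _, hj⟩ := Multiset.mem_map.mp hmem
    have hj0 : j ≠ (⟨0, by omega⟩ : Fin m) := by
      intro h; rw [h, heig0] at hj; exact hiz hj.symm
    have hj1 : (⟨1, by omega⟩ : Fin m) ≤ j := by
      rw [Fin.le_def]
      have : j.val ≠ 0 := fun h0 => hj0 (Fin.ext h0)
      simp only []
      omega
    have hjM : j ≤ (⟨m - 1, by omega⟩ : Fin m) := by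
      rw [Fin.le_def]
      have := j.isLt
      simp only []
      omega
    exact ⟨hj ▸ heig_mono hj1, hj ▸ heig_mono hjM⟩
  -- numeric bounds
  set r1 : ℝ := eig ⟨1, by omega⟩ with hr1def
  set rM : ℝ := eig ⟨m - 1, by omega⟩ with hrMdef
  have hr1 : 0 < r1 := heig1
  have hrM : r1 ≤ rM := by
    apply heig_mono
    rw [Fin.le_def]
    simp only []
    omega
  have hrM0 : 0 < rM := lt_of_lt_of_le hr1 hrM
  have hρinv : 0 < ρA⁻¹ := inv_pos.mpr hρ_pos
  have h1 : 1 - ρA⁻¹ < α * r1 := by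
    have h := mul_lt_mul_of_pos_left hα_lo hr1
    rw [← mul_assoc, mul_inv_cancel₀ (ne_of_gt hr1), one_mul] at h
    nlinarith
  have h2 : α * rM < 1 + ρA⁻¹ := by
    have h := mul_lt_mul_of_pos_left hα_hi hrM0
    rw [← mul_assoc, mul_inv_cancel₀ (ne_of_gt hrM0), one_mul] at h
    nlinarith
  have hsmall : ∀ i, i ≠ i0 → |1 - α * e i| < ρA⁻¹ := by
    intro i hi
    obtain ⟨hb1, hb2⟩ := hbound i (hne i hi)
    rw [abs_lt]
    constructor
    · nlinarith
    · nlinarith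
  -- complex matrices
  set Ac : Matrix (Fin n) (Fin n) ℂ := A.map Complex.ofReal with hAc
  set d : Fin m → ℂ := fun i => ((1 - α * e i : ℝ) : ℂ) with hd
  have hd0 : d i0 = 1 := by simp [hd, he0]
  have hlam0 : lam ≠ 0 := by
    intro h
    rw [h] at hlam
    simp at hlam
    linarith
  -- injectivity of off-blocks
  have hinj : ∀ i, i ≠ i0 →
      Function.Injective (d i • Ac - lam • (1 : Matrix (Fin n) (Fin n) ℂ)).mulVecLin := by
    intro i hi
    rw [← LinearMap.ker_eq_bot, LinearMap.ker_eq_bot']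
    intro v hv
    by_contra hv0
    have hv' : d i • (Ac *ᵥ v) = lam • v := by
      have h := hv
      rw [Matrix.mulVecLin_apply, Matrix.sub_mulVec, Matrix.smul_mulVec,
        Matrix.smul_mulVec, Matrix.one_mulVec, sub_eq_zero] at h
      exact h
    by_cases hdi : d i = 0
    · rw [hdi, zero_smul] at hv'
      exact hv0 (by
        have := hv'.symm
        rcases smul_eq_zero.mp this with h | h
        · exact absurd h hlam0
        · exact h)
    · have hev : Ac.mulVec v = (lam / d i) • v := by
        have h := congrArg (fun w => (d i)⁻¹ • w) hv'
        simp only [smul_smul, inv_mul_cancel₀ hdi, one_smul] at h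
        rw [h, div_eq_inv_mul]
      have hub := hρ_ub (lam / d i) ⟨v, hv0, hev⟩
      rw [norm_div] at hub
      have habs : ‖d i‖ < ρA⁻¹ := by
        show ‖((1 - α * e i : ℝ) : ℂ)‖ < ρA⁻¹
        rw [Complex.norm_real, Real.norm_eq_abs]
        exact hsmall i hi
      have habs0 : 0 < ‖d i‖ := norm_pos_iff.mpr hdi
      rw [div_le_iff₀ habs0] at hub
      nlinarith [mul_lt_mul_of_pos_left habs hρ_pos, mul_inv_cancel₀ (ne_of_gt hρ_pos)]
  -- spectral form of W over ℝ
  have hWr : W = U * diagonal (fun i => 1 - α * e i) * star U := by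
    have hdiag : diagonal (fun i : Fin m => 1 - α * e i)
        = 1 - α • diagonal e := by
      ext i j
      by_cases h : i = j <;> simp [diagonal_apply, h, Matrix.one_apply]
    rw [hW, hdiag, mul_sub, sub_mul, Matrix.mul_one, hUV, mul_smul_comm, smul_mul_assoc, ← hLspec]
  -- complexify
  set Uc : Matrix (Fin m) (Fin m) ℂ := U.map Complex.ofReal with hUc
  set Vc : Matrix (Fin m) (Fin m) ℂ := (star U).map Complex.ofReal with hVc
  set Dc : Matrix (Fin m) (Fin m) ℂ := diagonal d with hDc
  have hmapmul : ∀ (X Y : Matrix (Fin m) (Fin m) ℝ),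
      (X * Y).map Complex.ofReal = X.map Complex.ofReal * Y.map Complex.ofReal :=
    fun X Y => Matrix.map_mul (f := Complex.ofRealHom)
  have hmapone : (1 : Matrix (Fin m) (Fin m) ℝ).map Complex.ofReal = 1 :=
    Matrix.map_one _ Complex.ofReal_zero Complex.ofReal_one
  have hUcVc : Uc * Vc = 1 := by rw [hUc, hVc, ← hmapmul, hUV, hmapone]
  have hVcUc : Vc * Uc = 1 := by rw [hUc, hVc, ← hmapmul, hVU, hmapone]
  have hdm : (diagonal (fun i : Fin m => 1 - α * e i)).map Complex.ofReal = Dc := by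
    rw [Matrix.diagonal_map Complex.ofReal_zero]
  have hWc : W.map Complex.ofReal = Uc * Dc * Vc := by
    rw [hWr, hmapmul, hmapmul, hdm]
  have hkmap : (W ⊗ₖ A).map Complex.ofReal = (W.map Complex.ofReal) ⊗ₖ Ac := by
    ext p q
    obtain ⟨i, j⟩ := p
    obtain ⟨i', j'⟩ := q
    simp [Matrix.kroneckerMap_apply, hAc]
  set P : Matrix (Fin m × Fin n) (Fin m × Fin n) ℂ := Uc ⊗ₖ (1 : Matrix (Fin n) (Fin n) ℂ) with hP
  set Q : Matrix (Fin m × Fin n) (Fin m × Fin n) ℂ := Vc ⊗ₖ (1 : Matrix (Fin n) (Fin n) ℂ) with hQ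
  have hPQ : P * Q = 1 := by
    rw [hP, hQ, ← Matrix.mul_kronecker_mul, hUcVc, Matrix.one_mul, Matrix.one_kronecker_one]
  have hQP : Q * P = 1 := by
    rw [hP, hQ, ← Matrix.mul_kronecker_mul, hVcUc, Matrix.one_mul, Matrix.one_kronecker_one]
  have hmain : P * (Dc ⊗ₖ Ac) * Q = (Uc * Dc * Vc) ⊗ₖ Ac := by
    rw [hP, hQ, ← Matrix.mul_kronecker_mul, ← Matrix.mul_kronecker_mul,
      Matrix.one_mul, Matrix.mul_one]
  have hsm : P * (lam • (1 : Matrix (Fin m × Fin n) (Fin m × Fin n) ℂ)) * Q = lam • 1 := by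
    rw [mul_smul_comm, smul_mul_assoc, Matrix.mul_one, hPQ]
  have hconj : ((W ⊗ₖ A).map Complex.ofReal) - lam • (1 : Matrix (Fin m × Fin n) (Fin m × Fin n) ℂ)
      = P * (Dc ⊗ₖ Ac - lam • 1) * Q := by
    rw [mul_sub, sub_mul, hmain, hsm, hkmap, hWc]
  rw [hconj, aux_conj P Q _ hPQ hQP, hDc, aux_block d Ac lam i0 hd0 hinj]
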